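/- Suppose P and Q are joint distributions on finitely-valued variables X_1, …, X_n each satisfying the Markov chain property along X_1 → X_2 → ⋯ → X_n, i.e. P(x) = P_{X_1}(x_1)·∏_{i=2}^{n} P_{X_i | X_{i−1}}(x_i | x_{i−1}) and Q(x) = Q_{X_1}(x_1)·∏_{i=2}^{n} Q_{X_i | X_{i−1}}(x_i | x_{i−1}). Then H²(P, Q) ≤ H²(P_{X_1}, Q_{X_1}) + Σ_{i=2}^{n} H²(P_{X_{i−1},X_i}, Q_{X_{i−1},X_i}); in particular, if H²(P, Q) ≥ ε then there exists i with H²(P_{X_{i−1},X_i}, Q_{X_{i−1},X_i}) ≥ ε/n. -/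

import Mathlib

/-- The squared Hellinger distance `H²(p,q) = 1 - ∑ₖ √(pₖ qₖ)` between two
probability mass functions on a finite type. -/
noncomputable def sqHellinger {α : Type*} [Fintype α] (p q : α → ℝ) : ℝ :=
  1 - ∑ k, Real.sqrt (p k * q k)

open scoped Classical in
/-- The marginal of a joint distribution `P` on coordinates in the finite set `T`. -/
noncomputable def marg {ι : Type*} [Fintype ι] {α : ι → Type*} [∀ i, Fintype (α i)]
    (P : (∀ i, α i) → ℝ) (T : Finset ι) : ((i : T) → α i) → ℝ :=
  fun y => ∑ x : ∀ i, α i, if (∀ i : T, x i = y i) then P x else 0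

open scoped Classical
open Finset
attribute [-instance] Nat.decidableForallFin

namespace MarkovHellinger

lemma sum_univ_congr {β : Type*} (i1 i2 : Fintype β) (f g : β → ℝ) (h : ∀ b, f b = g b) :
    @Finset.sum β ℝ _ (@Finset.univ β i1) f = @Finset.sum β ℝ _ (@Finset.univ β i2) g := by
  cases Subsingleton.elim i1 i2
  exact Finset.sum_congr rfl fun b _ => h b

variable {ι : Type*} [Fintype ι] [DecidableEq ι] {α : ι → Type*} [∀ i, Fintype (α i)]

/-- `marg P T` evaluated at the restriction of a full configuration. -/
noncomputable def mg (P : (∀ i, α i) → ℝ) (T : Finset ι) (x : ∀ i, α i) : ℝ :=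
  marg P T (fun j => x j.1)

lemma mg_eq_sum (P : (∀ i, α i) → ℝ) (T : Finset ι) (x : ∀ i, α i) :
    mg P T x = ∑ z : ∀ i, α i, if (∀ j ∈ T, z j = x j) then P z else 0 := by
  unfold mg marg
  refine sum_univ_congr _ _ _ _ fun z => ?_
  refine if_congr ⟨fun h j hj => h ⟨j, hj⟩, fun h j => h j.1 j.2⟩ rfl rfl

lemma mg_nonneg (P : (∀ i, α i) → ℝ) (hP0 : ∀ x, 0 ≤ P x) (T : Finset ι) (x : ∀ i, α i) :
    0 ≤ mg P T x := by
  rw [mg_eq_sum]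
  refine Finset.sum_nonneg fun z _ => ?_
  split
  · exact hP0 z
  · exact le_refl 0

lemma mg_congr (P : (∀ i, α i) → ℝ) (T : Finset ι) {x y : ∀ i, α i}
    (h : ∀ j ∈ T, x j = y j) : mg P T x = mg P T y := by
  rw [mg_eq_sum, mg_eq_sum]
  refine Finset.sum_congr rfl fun z _ => ?_
  refine if_congr ⟨fun hz j hj => (hz j hj).trans (h j hj), fun hz j hj => (hz j hj).trans (h j hj).symm⟩ rfl rfl

lemma sum_ite_and_eq {β : Type*} [Fintype β] (c : Prop) (b : β) (r : ℝ)
    {inst : ∀ x : β, Decidable (c ∧ x = b)} {i2 : Decidable c} :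
    (∑ x : β, @ite _ (c ∧ x = b) (inst x) r 0) = @ite _ c i2 r 0 := by
  by_cases h : c <;> simp [h]

/-- Summing `mg P T'` over full configurations that are default off `T'` and match the
pattern `w` on `T ⊆ T'` gives the `T`-marginal at `w`. -/
lemma sum_pattern (P : (∀ i, α i) → ℝ) {T T' : Finset ι} (hT : T ⊆ T') (d w : ∀ i, α i) :
    (∑ x : ∀ i, α i, if ((∀ j, j ∉ T' → x j = d j) ∧ ∀ j ∈ T, x j = w j)
        then mg P T' x else 0) = mg P T w := by
  have key : ∀ x : ∀ i, α i,
      (if ((∀ j, j ∉ T' → x j = d j) ∧ ∀ j ∈ T, x j = w j) then mg P T' x else 0)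
      = ∑ z : ∀ i, α i, if (((∀ j, j ∉ T' → x j = d j) ∧ ∀ j ∈ T, x j = w j) ∧
          ∀ j ∈ T', z j = x j) then P z else 0 := by
    intro x
    by_cases h : ((∀ j, j ∉ T' → x j = d j) ∧ ∀ j ∈ T, x j = w j)
    · rw [if_pos h, mg_eq_sum]
      exact Finset.sum_congr rfl fun z _ => if_congr (and_iff_right h).symm rfl rfl
    · rw [if_neg h]
      symm
      exact Finset.sum_eq_zero fun z _ => if_neg fun hc => h hc.1
  rw [Finset.sum_congr rfl fun x _ => key x, Finset.sum_comm, mg_eq_sum]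
  refine Finset.sum_congr rfl fun z _ => ?_
  have hcond : ∀ x : ∀ i, α i,
      (((∀ j, j ∉ T' → x j = d j) ∧ ∀ j ∈ T, x j = w j) ∧ ∀ j ∈ T', z j = x j)
      ↔ ((∀ j ∈ T, z j = w j) ∧ x = fun j => if j ∈ T' then z j else d j) := by
    intro x
    constructor
    · rintro ⟨⟨hd, hw⟩, hz⟩
      refine ⟨fun j hj => (hz j (hT hj)).trans (hw j hj), funext fun j => ?_⟩
      by_cases hj : j ∈ T'
      · rw [if_pos hj, ← hz j hj]
      · rw [if_neg hj, hd j hj]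
    · rintro ⟨hzw, rfl⟩
      refine ⟨⟨fun j hj => if_neg hj, fun j hj => by show (if j ∈ T' then z j else d j) = w j; rw [if_pos (hT hj)]; exact hzw j hj⟩,
        fun j hj => (if_pos hj).symm⟩
  rw [Finset.sum_congr rfl fun x _ => if_congr (hcond x) rfl rfl]
  exact sum_ite_and_eq _ _ _

/-- Cauchy–Schwarz for Bhattacharyya-type sums. -/
lemma sum_sqrt_mul_le {β : Type*} (s : Finset β) (f g : β → ℝ)
    (hf : ∀ b ∈ s, 0 ≤ f b) (hg : ∀ b ∈ s, 0 ≤ g b) :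
    ∑ b ∈ s, Real.sqrt (f b * g b) ≤ Real.sqrt (∑ b ∈ s, f b) * Real.sqrt (∑ b ∈ s, g b) := by
  have h := Finset.sum_sq_le_sum_mul_sum_of_sq_eq_mul s hf hg
    (fun b hb => Real.sq_sqrt (mul_nonneg (hf b hb) (hg b hb)))
  have h0 : 0 ≤ ∑ b ∈ s, Real.sqrt (f b * g b) :=
    Finset.sum_nonneg fun b _ => Real.sqrt_nonneg _
  calc ∑ b ∈ s, Real.sqrt (f b * g b)
      = Real.sqrt ((∑ b ∈ s, Real.sqrt (f b * g b)) ^ 2) := (Real.sqrt_sq h0).symm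
    _ ≤ Real.sqrt ((∑ b ∈ s, f b) * ∑ b ∈ s, g b) := Real.sqrt_le_sqrt h
    _ = Real.sqrt (∑ b ∈ s, f b) * Real.sqrt (∑ b ∈ s, g b) :=
        Real.sqrt_mul (Finset.sum_nonneg hf) _

lemma sum_pattern_le (P Q : (∀ i, α i) → ℝ) (hP0 : ∀ x, 0 ≤ P x) (hQ0 : ∀ x, 0 ≤ Q x)
    {T T' : Finset ι} (hT : T ⊆ T') (d w : ∀ i, α i) :
    (∑ x : ∀ i, α i, if ((∀ j, j ∉ T' → x j = d j) ∧ ∀ j ∈ T, x j = w j)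
        then Real.sqrt (mg P T' x * mg Q T' x) else 0)
      ≤ Real.sqrt (mg P T w * mg Q T w) := by
  set s := Finset.univ.filter
    (fun x : ∀ i, α i => (∀ j, j ∉ T' → x j = d j) ∧ ∀ j ∈ T, x j = w j) with hs
  have hconv : ∀ R : (∀ i, α i) → ℝ,
      (∑ x : ∀ i, α i, if ((∀ j, j ∉ T' → x j = d j) ∧ ∀ j ∈ T, x j = w j) then R x else 0)
        = ∑ x ∈ s, R x := by
    intro R
    rw [hs, Finset.sum_filter]
  rw [hconv]
  calc ∑ x ∈ s, Real.sqrt (mg P T' x * mg Q T' x)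
      ≤ Real.sqrt (∑ x ∈ s, mg P T' x) * Real.sqrt (∑ x ∈ s, mg Q T' x) :=
        sum_sqrt_mul_le s _ _ (fun b _ => mg_nonneg P hP0 T' b) (fun b _ => mg_nonneg Q hQ0 T' b)
    _ = Real.sqrt (mg P T w) * Real.sqrt (mg Q T w) := by
        rw [← hconv (mg P T'), ← hconv (mg Q T'), sum_pattern P hT d w, sum_pattern Q hT d w]
    _ = Real.sqrt (mg P T w * mg Q T w) := (Real.sqrt_mul (mg_nonneg P hP0 T w) _).symm

/-- Group a default-off-`T'` indicator sum by the pattern on `T`. -/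
lemma sum_group (d : ∀ i, α i) (T T' : Finset ι) (F : (∀ i, α i) → ℝ) :
    (∑ x : ∀ i, α i, if (∀ j, j ∉ T' → x j = d j) then F x else 0)
    = ∑ w : ∀ i, α i, if (∀ j, j ∉ T → w j = d j) then
        (∑ x : ∀ i, α i, if ((∀ j, j ∉ T' → x j = d j) ∧ ∀ j ∈ T, x j = w j)
          then F x else 0) else 0 := by
  have key : ∀ w : ∀ i, α i,
      (if (∀ j, j ∉ T → w j = d j) then
        (∑ x : ∀ i, α i, if ((∀ j, j ∉ T' → x j = d j) ∧ ∀ j ∈ T, x j = w j)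
          then F x else 0) else 0)
      = ∑ x : ∀ i, α i, if ((∀ j, j ∉ T → w j = d j) ∧ (∀ j, j ∉ T' → x j = d j) ∧
          ∀ j ∈ T, x j = w j) then F x else 0 := by
    intro w
    by_cases h : (∀ j, j ∉ T → w j = d j)
    · rw [if_pos h]
      exact Finset.sum_congr rfl fun x _ => if_congr (and_iff_right h).symm rfl rfl
    · rw [if_neg h]
      symm
      exact Finset.sum_eq_zero fun x _ => if_neg fun hc => h hc.1
  rw [Finset.sum_congr rfl fun w _ => key w, Finset.sum_comm]
  refine Finset.sum_congr rfl fun x _ => ?_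
  have hcond : ∀ w : ∀ i, α i,
      ((∀ j, j ∉ T → w j = d j) ∧ (∀ j, j ∉ T' → x j = d j) ∧ ∀ j ∈ T, x j = w j)
      ↔ ((∀ j, j ∉ T' → x j = d j) ∧ w = fun j => if j ∈ T then x j else d j) := by
    intro w
    constructor
    · rintro ⟨hw, hx, hxw⟩
      refine ⟨hx, funext fun j => ?_⟩
      by_cases hj : j ∈ T
      · rw [if_pos hj, ← hxw j hj]
      · rw [if_neg hj, hw j hj]
    · rintro ⟨hx, rfl⟩
      exact ⟨fun j hj => if_neg hj, hx, fun j hj => (if_pos hj).symm⟩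
  rw [Finset.sum_congr rfl fun w _ => if_congr (hcond w) rfl rfl]
  exact (sum_ite_and_eq (β := ∀ i, α i) _ _ _).symm

/-- Decompose a sum over full configurations according to the value of coordinate `c`. -/
lemma sum_fiber (c : ι) (G : (∀ i, α i) → ℝ) :
    (∑ x : ∀ i, α i, G x) = ∑ v : α c, ∑ x : ∀ i, α i, if x c = v then G x else 0 := by
  rw [Finset.sum_comm]
  exact Finset.sum_congr rfl fun x _ => by simp

/-- Transfer sums over the subtype product to indicator sums over full configurations. -/
lemma sum_prod_eq (d : ∀ i, α i) (T : Finset ι) (F : ((j : T) → α j) → ℝ) :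
    (∑ y : (j : T) → α j, F y)
      = ∑ x : ∀ i, α i, if (∀ j, j ∉ T → x j = d j) then F (fun j => x j.1) else 0 := by
  rw [← Finset.sum_filter]
  refine Finset.sum_nbij' (fun y j => if h : j ∈ T then y ⟨j, h⟩ else d j)
    (fun x j => x j.1) (fun y _ => ?_) (fun x hx => Finset.mem_univ _) (fun y _ => ?_)
    (fun x hx => ?_) (fun y _ => ?_)
  · refine Finset.mem_filter.2 ⟨Finset.mem_univ _, fun j hj => dif_neg hj⟩
  · funext j
    exact dif_pos j.2
  · funext j
    show (if h : j ∈ T then x j else d j) = x j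
    by_cases hj : j ∈ T
    · exact dif_pos hj
    · rw [dif_neg hj]
      exact ((Finset.mem_filter.1 hx).2 j hj).symm
  · congr 1
    funext j
    show y j = (if h : (j : ι) ∈ T then y ⟨j, h⟩ else d j)
    rw [dif_pos j.2]

/-- Factorization of a fibered indicator sum over two coordinate blocks overlapping
only in the conditioning coordinate `c`. -/
lemma sum_fact (d : ∀ i, α i) (C Pr : Finset ι) (c : ι) (hcC : c ∈ C) (hcP : c ∈ Pr)
    (hint : ∀ j, j ∈ C → j ∈ Pr → j = c) (v : α c)
    (F G : (∀ i, α i) → ℝ)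
    (hF : ∀ x y : ∀ i, α i, (∀ j ∈ C, x j = y j) → F x = F y)
    (hG : ∀ x y : ∀ i, α i, (∀ j ∈ Pr, x j = y j) → G x = G y) :
    (∑ x : ∀ i, α i, if ((∀ j, j ∉ C ∪ Pr → x j = d j) ∧ x c = v) then F x * G x else 0)
    = (∑ x : ∀ i, α i, if ((∀ j, j ∉ C → x j = d j) ∧ x c = v) then F x else 0)
      * (∑ x : ∀ i, α i, if ((∀ j, j ∉ Pr → x j = d j) ∧ x c = v) then G x else 0) := by
  rw [← Finset.sum_filter, ← Finset.sum_filter, ← Finset.sum_filter, Finset.sum_mul_sum,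
    ← Finset.sum_product']
  refine Finset.sum_nbij'
    (fun x => (fun j => if j ∈ C then x j else d j, fun j => if j ∈ Pr then x j else d j))
    (fun p j => if j ∈ C then p.1 j else if j ∈ Pr then p.2 j else d j)
    ?_ ?_ ?_ ?_ ?_
  · intro x hx
    obtain ⟨-, hx⟩ := Finset.mem_filter.1 hx
    refine Finset.mem_product.2 ⟨Finset.mem_filter.2 ⟨Finset.mem_univ _, fun j hj => if_neg hj, ?_⟩,
      Finset.mem_filter.2 ⟨Finset.mem_univ _, fun j hj => if_neg hj, ?_⟩⟩
    · show (if c ∈ C then x c else d c) = v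
      rw [if_pos hcC]; exact hx.2
    · show (if c ∈ Pr then x c else d c) = v
      rw [if_pos hcP]; exact hx.2
  · intro p hp
    obtain ⟨hp1, hp2⟩ := Finset.mem_product.1 hp
    obtain ⟨-, h1, h1v⟩ := Finset.mem_filter.1 hp1
    obtain ⟨-, h2, h2v⟩ := Finset.mem_filter.1 hp2
    refine Finset.mem_filter.2 ⟨Finset.mem_univ _, fun j hj => ?_, ?_⟩
    · rw [Finset.mem_union] at hj
      push_neg at hj
      show (if j ∈ C then p.1 j else if j ∈ Pr then p.2 j else d j) = d j
      rw [if_neg hj.1, if_neg hj.2]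
    · show (if c ∈ C then p.1 c else if c ∈ Pr then p.2 c else d c) = v
      rw [if_pos hcC]; exact h1v
  · intro x hx
    obtain ⟨-, hx, -⟩ := Finset.mem_filter.1 hx
    funext j
    show (if j ∈ C then (if j ∈ C then x j else d j)
      else if j ∈ Pr then (if j ∈ Pr then x j else d j) else d j) = x j
    by_cases h1 : j ∈ C
    · rw [if_pos h1, if_pos h1]
    · rw [if_neg h1]
      by_cases h2 : j ∈ Pr
      · rw [if_pos h2, if_pos h2]
      · rw [if_neg h2]
        exact (hx j (by simp [h1, h2])).symm
  · intro p hp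
    obtain ⟨hp1, hp2⟩ := Finset.mem_product.1 hp
    obtain ⟨-, h1, h1v⟩ := Finset.mem_filter.1 hp1
    obtain ⟨-, h2, h2v⟩ := Finset.mem_filter.1 hp2
    have : (fun j => if j ∈ C then p.1 j else if j ∈ Pr then p.2 j else d j) = fun j =>
        (if j ∈ C then p.1 j else if j ∈ Pr then p.2 j else d j) := rfl
    refine Prod.ext ?_ ?_
    · funext j
      show (if j ∈ C then (if j ∈ C then p.1 j else if j ∈ Pr then p.2 j else d j) else d j)
        = p.1 j
      by_cases hj : j ∈ C
      · rw [if_pos hj, if_pos hj]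
      · rw [if_neg hj]
        exact (h1 j hj).symm
    · funext j
      show (if j ∈ Pr then (if j ∈ C then p.1 j else if j ∈ Pr then p.2 j else d j) else d j)
        = p.2 j
      by_cases hj : j ∈ Pr
      · rw [if_pos hj]
        by_cases hj' : j ∈ C
        · rw [if_pos hj']
          have hjc : j = c := hint j hj' hj
          subst hjc
          rw [h1v, h2v]
        · rw [if_neg hj', if_pos hj]
      · rw [if_neg hj]
        exact (h2 j hj).symm
  · intro x hx
    show F x * G x = F (fun j => if j ∈ C then x j else d j) * G (fun j => if j ∈ Pr then x j else d j)
    rw [← hF x _ (fun j hj => (if_pos hj).symm), ← hG x _ (fun j hj => (if_pos hj).symm)]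

lemma mg_univ (P : (∀ i, α i) → ℝ) (x : ∀ i, α i) : mg P Finset.univ x = P x := by
  rw [mg_eq_sum]
  have : ∀ z : ∀ i, α i, (∀ j ∈ (Finset.univ : Finset ι), z j = x j) ↔ z = x := by
    intro z
    constructor
    · intro h; funext j; exact h j (Finset.mem_univ j)
    · rintro rfl j _; rfl
  rw [Finset.sum_congr rfl fun z _ => if_congr (this z) rfl rfl]
  simp

/-- The Bhattacharyya coefficient of the `T`-marginals, as a full-space indicator sum. -/
noncomputable def bH (P Q : (∀ i, α i) → ℝ) (d : ∀ i, α i) (T : Finset ι) : ℝ :=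
  ∑ x : ∀ i, α i, if (∀ j, j ∉ T → x j = d j) then Real.sqrt (mg P T x * mg Q T x) else 0

lemma sqHellinger_marg (P Q : (∀ i, α i) → ℝ) (d : ∀ i, α i) (T : Finset ι) :
    sqHellinger (marg P T) (marg Q T) = 1 - bH P Q d T := by
  unfold sqHellinger bH
  rw [sum_prod_eq d T (fun y => Real.sqrt (marg P T y * marg Q T y))]
  rfl

lemma bH_univ (P Q : (∀ i, α i) → ℝ) (d : ∀ i, α i) :
    bH P Q d Finset.univ = ∑ x : ∀ i, α i, Real.sqrt (P x * Q x) := by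
  unfold bH
  refine Finset.sum_congr rfl fun x _ => ?_
  rw [if_pos (fun j hj => absurd (Finset.mem_univ j) hj), mg_univ, mg_univ]

lemma bH_mono (P Q : (∀ i, α i) → ℝ) (hP0 : ∀ x, 0 ≤ P x) (hQ0 : ∀ x, 0 ≤ Q x)
    (d : ∀ i, α i) {T T' : Finset ι} (hT : T ⊆ T') : bH P Q d T' ≤ bH P Q d T := by
  unfold bH
  rw [sum_group d T T']
  refine Finset.sum_le_sum fun w _ => ?_
  by_cases h : (∀ j, j ∉ T → w j = d j)
  · rw [if_pos h, if_pos h]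
    exact sum_pattern_le P Q hP0 hQ0 hT d w
  · rw [if_neg h, if_neg h]

lemma ite_ite_and {p q : Prop} {ip : Decidable p} {iq : Decidable q}
    {ipq : Decidable (p ∧ q)} {a : ℝ} :
    (@ite _ q iq (@ite _ p ip a 0) 0) = @ite _ (p ∧ q) ipq a 0 := by
  by_cases hp : p <;> by_cases hq : q <;> simp [hp, hq]

section FinChain

variable {m : ℕ} {α : Fin (m + 1) → Type*} [∀ i, Fintype (α i)]

set_option maxHeartbeats 1000000 in
lemma step_lemma (P Q : (∀ i, α i) → ℝ)
    (hP0 : ∀ x, 0 ≤ P x) (hP1 : ∑ x, P x = 1)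
    (hQ0 : ∀ x, 0 ≤ Q x) (hQ1 : ∑ x, Q x = 1)
    (d : ∀ i, α i) (i : Fin m)
    (hPf : ∀ x : ∀ j, α j, mg P (Finset.Iic i.succ) x * mg P {i.castSucc} x =
      mg P (Finset.Iic i.castSucc) x * mg P {i.castSucc, i.succ} x)
    (hQf : ∀ x : ∀ j, α j, mg Q (Finset.Iic i.succ) x * mg Q {i.castSucc} x =
      mg Q (Finset.Iic i.castSucc) x * mg Q {i.castSucc, i.succ} x) :
    bH P Q d (Finset.Iic i.castSucc) + (bH P Q d {i.castSucc, i.succ} - 1)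
      ≤ bH P Q d (Finset.Iic i.succ) := by

  set c := i.castSucc with hc
  set sc := i.succ with hsc
  set C := Finset.Iic c with hCdef
  set Pr := ({c, sc} : Finset (Fin (m + 1))) with hPrdef
  set S := Finset.Iic sc with hSdef
  have hcsc : c < sc := Fin.castSucc_lt_succ
  have hS : S = C ∪ Pr := by
    ext j
    simp only [hSdef, hCdef, hPrdef, Finset.mem_Iic, Finset.mem_union, Finset.mem_insert,
      Finset.mem_singleton]
    constructor
    · intro h
      rcases lt_or_eq_of_le h with h' | h'
      · exact Or.inl (Fin.le_castSucc_iff.2 h')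
      · exact Or.inr (Or.inr h')
    · rintro (h | h | h)
      · exact h.trans hcsc.le
      · exact h.le.trans hcsc.le
      · exact h.le
  have hcC : c ∈ C := Finset.mem_Iic.2 le_rfl
  have hcP : c ∈ Pr := Finset.mem_insert_self _ _
  have hint : ∀ j, j ∈ C → j ∈ Pr → j = c := by
    intro j hjC hjP
    rcases Finset.mem_insert.1 hjP with h | h
    · exact h
    · rw [Finset.mem_singleton] at h
      subst h
      exact absurd (Finset.mem_Iic.1 hjC) (not_le.2 hcsc)
  have hsingC : ({c} : Finset (Fin (m + 1))) ⊆ C := by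
    intro j hj; rw [Finset.mem_singleton] at hj; subst hj; exact hcC
  have hsingP : ({c} : Finset (Fin (m + 1))) ⊆ Pr := by
    intro j hj; rw [Finset.mem_singleton] at hj; subst hj; exact hcP
  -- pointwise Markov identity for the square roots
  have hmark : ∀ x : ∀ j, α j,
      Real.sqrt (mg P S x * mg Q S x) * Real.sqrt (mg P {c} x * mg Q {c} x)
      = Real.sqrt (mg P C x * mg Q C x) * Real.sqrt (mg P Pr x * mg Q Pr x) := by
    intro x
    rw [← Real.sqrt_mul (mul_nonneg (mg_nonneg P hP0 _ _) (mg_nonneg Q hQ0 _ _)),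
      ← Real.sqrt_mul (mul_nonneg (mg_nonneg P hP0 _ _) (mg_nonneg Q hQ0 _ _))]
    congr 1
    linear_combination (mg Q S x * mg Q {c} x) * hPf x +
      (mg P C x * mg P Pr x) * hQf x
  -- the fibered quantities
  set g : α c → ℝ := fun v => ∑ x : ∀ j, α j,
    if ((∀ j, j ∉ C → x j = d j) ∧ x c = v) then Real.sqrt (mg P C x * mg Q C x) else 0 with hg
  set t : α c → ℝ := fun v => ∑ x : ∀ j, α j,
    if ((∀ j, j ∉ Pr → x j = d j) ∧ x c = v) then Real.sqrt (mg P Pr x * mg Q Pr x) else 0 with ht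
  set u : α c → ℝ := fun v => ∑ x : ∀ j, α j,
    if ((∀ j, j ∉ S → x j = d j) ∧ x c = v) then Real.sqrt (mg P S x * mg Q S x) else 0 with hu
  set s : α c → ℝ := fun v =>
    Real.sqrt (mg P {c} (Function.update d c v) * mg Q {c} (Function.update d c v)) with hs
  -- fiberwise decomposition of the three Bhattacharyya sums
  have hdec : ∀ T : Finset (Fin (m + 1)), bH P Q d T = ∑ v : α c, ∑ x : ∀ j, α j,
      if ((∀ j, j ∉ T → x j = d j) ∧ x c = v) then Real.sqrt (mg P T x * mg Q T x) else 0 := by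
    intro T
    rw [bH, sum_fiber c]
    exact Finset.sum_congr rfl fun v _ => Finset.sum_congr rfl fun x _ => ite_ite_and
  -- the singleton-condition rewriting
  have hsingcond : ∀ v : α c, ∀ x : ∀ j, α j,
      (∀ j ∈ ({c} : Finset (Fin (m+1))), x j = Function.update d c v j) ↔ x c = v := by
    intro v x
    constructor
    · intro h
      have := h c (Finset.mem_singleton_self c)
      rwa [Function.update_self] at this
    · intro h j hj
      rw [Finset.mem_singleton] at hj
      subst hj
      rw [h, Function.update_self]
  -- bounds g ≤ s, t ≤ s
  have hgs : ∀ v, g v ≤ s v := by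
    intro v
    simp only [hg, hs]
    have := sum_pattern_le P Q hP0 hQ0 hsingC d (Function.update d c v)
    refine le_trans (le_of_eq ?_) this
    refine Finset.sum_congr rfl fun x _ => ?_
    congr 1
    exact propext (and_congr Iff.rfl (hsingcond v x).symm)
  have hts : ∀ v, t v ≤ s v := by
    intro v
    simp only [ht, hs]
    have := sum_pattern_le P Q hP0 hQ0 hsingP d (Function.update d c v)
    refine le_trans (le_of_eq ?_) this
    refine Finset.sum_congr rfl fun x _ => ?_
    congr 1
    exact propext (and_congr Iff.rfl (hsingcond v x).symm)
  -- nonnegativity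
  have hg0 : ∀ v, 0 ≤ g v := fun v => Finset.sum_nonneg fun x _ => by
    split
    · exact Real.sqrt_nonneg _
    · exact le_rfl
  have ht0 : ∀ v, 0 ≤ t v := fun v => Finset.sum_nonneg fun x _ => by
    split
    · exact Real.sqrt_nonneg _
    · exact le_rfl
  have hu0 : ∀ v, 0 ≤ u v := fun v => Finset.sum_nonneg fun x _ => by
    split
    · exact Real.sqrt_nonneg _
    · exact le_rfl
  have hs0 : ∀ v, 0 ≤ s v := fun v => Real.sqrt_nonneg _
  -- key factorization u v * s v = g v * t v
  have hkey : ∀ v, u v * s v = g v * t v := by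
    intro v
    simp only [hu, hg, ht]
    rw [Finset.sum_mul]
    have hstep : ∀ x : ∀ j, α j,
        (if ((∀ j, j ∉ S → x j = d j) ∧ x c = v)
          then Real.sqrt (mg P S x * mg Q S x) else 0) * s v
        = if ((∀ j, j ∉ C ∪ Pr → x j = d j) ∧ x c = v)
          then Real.sqrt (mg P C x * mg Q C x) * Real.sqrt (mg P Pr x * mg Q Pr x) else 0 := by
      intro x
      rw [← hS]
      by_cases h : ((∀ j, j ∉ S → x j = d j) ∧ x c = v)
      · rw [if_pos h, if_pos h]
        have hagree : ∀ j ∈ ({c} : Finset (Fin (m+1))), Function.update d c v j = x j := by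
          intro j hj
          rw [Finset.mem_singleton] at hj
          subst hj
          rw [Function.update_self, h.2]
        have h1 : mg P {c} (Function.update d c v) = mg P {c} x := mg_congr P {c} hagree
        have h2 : mg Q {c} (Function.update d c v) = mg Q {c} x := mg_congr Q {c} hagree
        have hsv : s v = Real.sqrt (mg P {c} x * mg Q {c} x) := by
          simp only [hs]
          rw [h1, h2]
        rw [hsv, hmark x]
      · rw [if_neg h, if_neg h, zero_mul]
    rw [Finset.sum_congr rfl fun x _ => hstep x]
    exact sum_fact d C Pr c hcC hcP hint v (fun x => Real.sqrt (mg P C x * mg Q C x)) (fun x => Real.sqrt (mg P Pr x * mg Q Pr x))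
      (fun x y hxy => by
        show Real.sqrt (mg P C x * mg Q C x) = Real.sqrt (mg P C y * mg Q C y)
        rw [mg_congr P C hxy, mg_congr Q C hxy])
      (fun x y hxy => by
        show Real.sqrt (mg P Pr x * mg Q Pr x) = Real.sqrt (mg P Pr y * mg Q Pr y)
        rw [mg_congr P Pr hxy, mg_congr Q Pr hxy])
  -- ∑ s ≤ 1
  have hssum : ∑ v : α c, s v ≤ 1 := by
    have hmg : ∀ (R : (∀ j, α j) → ℝ), (∑ x, R x = 1) → (∑ v : α c, mg R {c} (Function.update d c v)) = 1 := by
      intro R hR1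
      have : ∀ v : α c, mg R {c} (Function.update d c v)
          = ∑ z : ∀ j, α j, if z c = v then R z else 0 := by
        intro v
        rw [mg_eq_sum]
        exact Finset.sum_congr rfl fun z _ => if_congr (hsingcond v z) rfl rfl
      rw [Finset.sum_congr rfl fun v _ => this v, Finset.sum_comm]
      rw [← hR1]
      exact Finset.sum_congr rfl fun z _ => by simp
    calc ∑ v : α c, s v
        ≤ Real.sqrt (∑ v : α c, mg P {c} (Function.update d c v)) *
          Real.sqrt (∑ v : α c, mg Q {c} (Function.update d c v)) := by
          rw [hs]
          exact sum_sqrt_mul_le Finset.univ _ _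
            (fun v _ => mg_nonneg P hP0 _ _) (fun v _ => mg_nonneg Q hQ0 _ _)
      _ = 1 := by rw [hmg P hP1, hmg Q hQ1, Real.sqrt_one, one_mul]
  -- pointwise inequality g + t - s ≤ u
  have hpt : ∀ v, g v + t v - s v ≤ u v := by
    intro v
    rcases eq_or_lt_of_le (hs0 v) with h0 | h0
    · have hgz : g v = 0 := le_antisymm (by rw [h0]; exact hgs v) (hg0 v)
      have htz : t v = 0 := le_antisymm (by rw [h0]; exact hts v) (ht0 v)
      rw [hgz, htz, ← h0]
      simpa using hu0 v
    · have hmul : (g v + t v - s v) * s v ≤ u v * s v := by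
        rw [hkey v]
        nlinarith [mul_nonneg (sub_nonneg.2 (hgs v)) (sub_nonneg.2 (hts v))]
      exact le_of_mul_le_mul_right hmul h0
  -- assemble
  rw [hdec C, hdec Pr, hdec S]
  calc (∑ v, g v) + ((∑ v, t v) - 1)
      ≤ (∑ v, g v) + ((∑ v, t v) - ∑ v, s v) := by linarith [hssum]
    _ = ∑ v, (g v + t v - s v) := by rw [Finset.sum_sub_distrib, Finset.sum_add_distrib]; ring
    _ ≤ ∑ v, u v := Finset.sum_le_sum fun v _ => hpt v

end FinChain

end MarkovHellinger
set_option maxHeartbeats 1000000 in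
/-- **Squared Hellinger subadditivity for Markov chains.**
`P` and `Q` are joint distributions on `n = m + 1 ≥ 2` finitely-valued variables
`X_0 → X_1 → ⋯ → X_m`, each satisfying the Markov chain property, expressed
equivalently via marginals: for every edge `(i.castSucc, i.succ)` the marginal on
`{0,…,i+1}` times the marginal on `{i}` equals the marginal on `{0,…,i}` times the
marginal on `{i, i+1}`, pointwise.  Then
`H²(P,Q) ≤ H²(P_{X_0},Q_{X_0}) + ∑ i, H²(P_{X_i,X_{i+1}}, Q_{X_i,X_{i+1}})`;
in particular, if `H²(P,Q) ≥ ε` then some consecutive pair satisfies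
`H²(P_{X_i,X_{i+1}}, Q_{X_i,X_{i+1}}) ≥ ε / n`. -/
theorem sqHellinger_subadditive_markov_chain
    {m : ℕ} (hm : 0 < m) (α : Fin (m + 1) → Type*) [∀ i, Fintype (α i)]
    (P Q : (∀ i, α i) → ℝ)
    (hP0 : ∀ x, 0 ≤ P x) (hP1 : ∑ x, P x = 1)
    (hQ0 : ∀ x, 0 ≤ Q x) (hQ1 : ∑ x, Q x = 1)
    (hPfac : ∀ i : Fin m, ∀ x : ∀ j, α j,
      marg P (Finset.Iic i.succ) (fun j => x j.1) *
          marg P {i.castSucc} (fun j => x j.1) =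
        marg P (Finset.Iic i.castSucc) (fun j => x j.1) *
          marg P {i.castSucc, i.succ} (fun j => x j.1))
    (hQfac : ∀ i : Fin m, ∀ x : ∀ j, α j,
      marg Q (Finset.Iic i.succ) (fun j => x j.1) *
          marg Q {i.castSucc} (fun j => x j.1) =
        marg Q (Finset.Iic i.castSucc) (fun j => x j.1) *
          marg Q {i.castSucc, i.succ} (fun j => x j.1)) :
    sqHellinger P Q ≤
        sqHellinger (marg P {(0 : Fin (m + 1))}) (marg Q {(0 : Fin (m + 1))}) +
          ∑ i : Fin m,
            sqHellinger (marg P {i.castSucc, i.succ}) (marg Q {i.castSucc, i.succ}) ∧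
      ∀ ε : ℝ, sqHellinger P Q ≥ ε →
        ∃ i : Fin m,
          sqHellinger (marg P {i.castSucc, i.succ}) (marg Q {i.castSucc, i.succ}) ≥
            ε / (m + 1 : ℝ) := by
  have hne : Nonempty (∀ i, α i) := by
    by_contra h
    rw [not_nonempty_iff] at h
    rw [Finset.univ_eq_empty, Finset.sum_empty] at hP1
    exact absurd hP1 (by norm_num)
  obtain ⟨d⟩ := hne
  have hIic0 : Finset.Iic (0 : Fin (m + 1)) = {0} := by
    ext j
    simp [Fin.le_zero_iff]
  have hIiclast : Finset.Iic (Fin.last m) = Finset.univ := by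
    ext j
    simp [Fin.le_last]
  have hPQ : sqHellinger P Q = 1 - MarkovHellinger.bH P Q d Finset.univ := by
    unfold sqHellinger
    rw [MarkovHellinger.bH_univ]
  have hmarg : ∀ T : Finset (Fin (m + 1)), sqHellinger (marg P T) (marg Q T)
      = 1 - MarkovHellinger.bH P Q d T := fun T => MarkovHellinger.sqHellinger_marg P Q d T
  -- telescoping
  set TT : ℕ → ℝ := fun j => if h : j < m then
    MarkovHellinger.bH P Q d {(⟨j, h⟩ : Fin m).castSucc, (⟨j, h⟩ : Fin m).succ} else 0 with hTT
  have htel : ∀ k : ℕ, ∀ hk : k ≤ m,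
      MarkovHellinger.bH P Q d (Finset.Iic (0 : Fin (m + 1)))
        + ∑ j ∈ Finset.range k, (TT j - 1)
      ≤ MarkovHellinger.bH P Q d (Finset.Iic (⟨k, by omega⟩ : Fin (m + 1))) := by
    intro k
    induction k with
    | zero =>
      intro _
      have h0 : (⟨0, by omega⟩ : Fin (m + 1)) = 0 := by
        apply Fin.ext
        simp
      rw [h0]
      simp
    | succ k ih =>
      intro hk
      have hk' : k < m := by omega
      have hcs : ((⟨k, hk'⟩ : Fin m).castSucc : Fin (m + 1)) = ⟨k, by omega⟩ := by
        apply Fin.ext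
        simp
      have hsc : ((⟨k, hk'⟩ : Fin m).succ : Fin (m + 1)) = ⟨k + 1, by omega⟩ := by
        apply Fin.ext
        simp
      have hstep := MarkovHellinger.step_lemma P Q hP0 hP1 hQ0 hQ1 d ⟨k, hk'⟩
        (hPfac ⟨k, hk'⟩) (hQfac ⟨k, hk'⟩)
      rw [hcs, hsc] at hstep
      have hTTk : TT k = MarkovHellinger.bH P Q d
          {(⟨k, hk'⟩ : Fin m).castSucc, (⟨k, hk'⟩ : Fin m).succ} := by
        simp only [hTT]
        exact dif_pos hk'
      rw [hcs, hsc] at hTTk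
      rw [Finset.sum_range_succ]
      have := ih (by omega)
      linarith [this, hstep, hTTk.le, hTTk.ge]
  -- main inequality
  have hsum : ∑ j ∈ Finset.range m, (TT j - 1)
      = ∑ i : Fin m, (MarkovHellinger.bH P Q d {i.castSucc, i.succ} - 1) := by
    rw [← Fin.sum_univ_eq_sum_range (fun j => TT j - 1) m]
    refine Finset.sum_congr rfl fun i _ => ?_
    have : TT i.val = MarkovHellinger.bH P Q d {i.castSucc, i.succ} := by
      simp only [hTT]
      rw [dif_pos i.isLt]
    rw [this]
  have hlast : (⟨m, by omega⟩ : Fin (m + 1)) = Fin.last m := rfl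
  have hmainB := htel m le_rfl
  rw [hsum, hlast, hIiclast, hIic0] at hmainB
  have hpair : ∀ i : Fin m, sqHellinger (marg P {i.castSucc, i.succ}) (marg Q {i.castSucc, i.succ})
      = 1 - MarkovHellinger.bH P Q d {i.castSucc, i.succ} := fun i => hmarg _
  have hsum2 : ∑ i : Fin m, sqHellinger (marg P {i.castSucc, i.succ}) (marg Q {i.castSucc, i.succ})
      = ∑ i : Fin m, (1 - MarkovHellinger.bH P Q d {i.castSucc, i.succ}) :=
    Finset.sum_congr rfl fun i _ => hpair i
  have hs1 : ∑ i : Fin m, (1 - MarkovHellinger.bH P Q d {i.castSucc, i.succ})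
      = (m : ℝ) - ∑ i : Fin m, MarkovHellinger.bH P Q d {i.castSucc, i.succ} := by
    rw [Finset.sum_sub_distrib]
    simp
  have hs2 : ∑ i : Fin m, (MarkovHellinger.bH P Q d {i.castSucc, i.succ} - 1)
      = (∑ i : Fin m, MarkovHellinger.bH P Q d {i.castSucc, i.succ}) - (m : ℝ) := by
    rw [Finset.sum_sub_distrib]
    simp
  have hmain : sqHellinger P Q ≤
      sqHellinger (marg P {(0 : Fin (m + 1))}) (marg Q {(0 : Fin (m + 1))}) +
        ∑ i : Fin m, sqHellinger (marg P {i.castSucc, i.succ}) (marg Q {i.castSucc, i.succ}) := by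
    rw [hPQ, hmarg {(0 : Fin (m + 1))}, hsum2, hs1]
    rw [hs2] at hmainB
    linarith [hmainB]
  refine ⟨hmain, ?_⟩
  intro ε hε
  by_contra hcon
  push_neg at hcon
  set i0 : Fin m := ⟨0, hm⟩ with hi0
  have hcs0 : (i0.castSucc : Fin (m + 1)) = 0 := by
    apply Fin.ext
    simp [hi0]
  have hsub : ({(0 : Fin (m + 1))} : Finset (Fin (m + 1))) ⊆ {i0.castSucc, i0.succ} := by
    intro j hj
    rw [Finset.mem_singleton] at hj
    subst hj
    rw [← hcs0]
    exact Finset.mem_insert_self _ _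
  have hmono : sqHellinger (marg P {(0 : Fin (m + 1))}) (marg Q {(0 : Fin (m + 1))})
      ≤ sqHellinger (marg P {i0.castSucc, i0.succ}) (marg Q {i0.castSucc, i0.succ}) := by
    rw [hmarg, hpair i0]
    have := MarkovHellinger.bH_mono P Q hP0 hQ0 d hsub
    linarith [this]
  have hbound : ∑ i : Fin m, sqHellinger (marg P {i.castSucc, i.succ}) (marg Q {i.castSucc, i.succ})
      < (m : ℝ) * (ε / (m + 1 : ℝ)) := by
    have hne' : (Finset.univ : Finset (Fin m)).Nonempty := ⟨i0, Finset.mem_univ _⟩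
    calc ∑ i : Fin m, sqHellinger (marg P {i.castSucc, i.succ}) (marg Q {i.castSucc, i.succ})
        < ∑ _i : Fin m, (ε / (m + 1 : ℝ)) :=
          Finset.sum_lt_sum_of_nonempty hne' fun i _ => hcon i
      _ = (m : ℝ) * (ε / (m + 1 : ℝ)) := by
          rw [Finset.sum_const]
          simp [mul_comm]
  have hεeq : (ε / (m + 1 : ℝ)) * ((m : ℝ) + 1) = ε := by
    field_simp
  have h1 : ε ≤ sqHellinger P Q := hε
  have h2 := hmono
  have h3 := hcon i0
  nlinarith [hmain, hbound]
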